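/- The function Ord : G(k) → ℕ ∪ {∞} assigning to a marked group (G, s_1, ..., s_k) the order of the last generator s_k is continuous, where ℕ ∪ {∞} carries the topology of the one-point compactification of ℕ. -/

import Mathlib

/-- The space `𝒩(k)` of normal subgroups of the free group `F_k`. -/
def MarkedNormal (k : ℕ) : Type := {N : Subgroup (FreeGroup (Fin k)) // N.Normal}

open Classical in
/-- The characteristic function `χ_N ∈ {0,1}^{F_k}` of a normal subgroup. -/
noncomputable def chi (k : ℕ) (N : MarkedNormal k) : FreeGroup (Fin k) → Bool :=
  fun g => decide (g ∈ N.1)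

/-- The Cayley topology on `𝒩(k)`: the topology of pointwise convergence of
characteristic functions. -/
noncomputable instance cayleyTopology (k : ℕ) : TopologicalSpace (MarkedNormal k) :=
  TopologicalSpace.induced (chi k) inferInstance

open Classical in
/-- `Ord(G, s₁, …, s_k)`: the order of the generator `s_i` of the marked group
`F_k/N`, as an element of the one-point compactification `ℕ ∪ {∞}`. -/
noncomputable def MarkedOrd (k : ℕ) (i : Fin k) (N : MarkedNormal k) : OnePoint ℕ :=
  letI := N.2
  if orderOf (QuotientGroup.mk (FreeGroup.of i) : FreeGroup (Fin k) ⧸ N.1) = 0 then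
    OnePoint.infty
  else
    ((orderOf (QuotientGroup.mk (FreeGroup.of i) : FreeGroup (Fin k) ⧸ N.1) : ℕ) : OnePoint ℕ)

open OnePoint in
private lemma isClopen_memSet (k : ℕ) (g : FreeGroup (Fin k)) :
    IsClopen {N : MarkedNormal k | g ∈ N.1} := by
  have h : {N : MarkedNormal k | g ∈ N.1} = chi k ⁻¹' ((fun f => f g) ⁻¹' {true}) := by
    ext N; simp [chi]
  rw [h]
  exact ((isClopen_discrete {true}).preimage (continuous_apply g)).preimage
    continuous_induced_dom

open OnePoint in
/-- The function `Ord : 𝒢(k) → ℕ ∪ {∞}` assigning to a marked group the order of a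
marked generator is continuous, where `ℕ ∪ {∞}` carries the topology of the one-point
compactification of `ℕ`. -/
theorem ord_continuous (k : ℕ) (i : Fin k) :
    Continuous fun N : MarkedNormal k => MarkedOrd k i N := by
  set x := FreeGroup.of i with hx
  let o : MarkedNormal k → ℕ := fun N =>
    letI := N.2; orderOf (QuotientGroup.mk x : FreeGroup (Fin k) ⧸ N.1)
  have hf : ∀ N, MarkedOrd k i N = if o N = 0 then ∞ else ((o N : ℕ) : OnePoint ℕ) :=
    fun N => rfl
  have hpow : ∀ (N : MarkedNormal k) (m : ℕ),
      (letI := N.2; ((QuotientGroup.mk x : FreeGroup (Fin k) ⧸ N.1) ^ m = 1)) ↔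
        x ^ m ∈ N.1 := by
    intro N m
    letI := N.2
    rw [← QuotientGroup.mk_pow, QuotientGroup.eq_one_iff]
  rw [continuous_def]
  intro s hs
  rw [isOpen_iff_forall_mem_open]
  intro N hN
  by_cases h0 : o N = 0
  · -- infinite order
    have hinf : ∞ ∈ s := by
      have := hN
      simp only [Set.mem_preimage, hf, h0, if_pos] at this
      exact this
    have hcpt : IsCompact (((↑) ⁻¹' s : Set ℕ)ᶜ) := (hs.1) hinf
    have hfin : (((↑) ⁻¹' s : Set ℕ)ᶜ).Finite := hcpt.finite_of_discrete
    obtain ⟨M, hM⟩ : ∃ M : ℕ, ∀ n : ℕ, n ≥ M → (n : OnePoint ℕ) ∈ s := by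
      obtain ⟨M, hM⟩ := hfin.bddAbove
      refine ⟨M + 1, fun n hn => ?_⟩
      by_contra hns
      have : n ≤ M := hM hns
      omega
    refine ⟨⋂ m ∈ Finset.Ico 1 M, {N' : MarkedNormal k | x ^ m ∈ N'.1}ᶜ, ?_, ?_, ?_⟩
    · intro N' hN'
      simp only [Set.mem_iInter, Set.mem_compl_iff, Set.mem_setOf_eq, Finset.mem_Ico] at hN'
      simp only [Set.mem_preimage, hf]
      by_cases h0' : o N' = 0
      · simpa [h0'] using hinf
      · rw [if_neg h0']
        apply hM
        by_contra hlt
        push_neg at hlt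
        have hmem : x ^ (o N') ∈ N'.1 := by
          rw [← hpow]
          letI := N'.2
          exact pow_orderOf_eq_one _
        exact hN' (o N') ⟨Nat.one_le_iff_ne_zero.mpr h0', hlt⟩ hmem
    · exact isOpen_biInter_finset fun m _ => (isClopen_memSet k (x ^ m)).compl.2
    · simp only [Set.mem_iInter, Set.mem_compl_iff, Set.mem_setOf_eq, Finset.mem_Ico]
      intro m hm
      letI := N.2
      rw [← hpow]
      exact (orderOf_eq_zero_iff'.mp h0) m (by omega)
  · -- finite order n = o N
    have hns : ((o N : ℕ) : OnePoint ℕ) ∈ s := by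
      have := hN
      simp only [Set.mem_preimage, hf, if_neg h0] at this
      exact this
    refine ⟨{N' : MarkedNormal k | x ^ (o N) ∈ N'.1} ∩
        ⋂ m ∈ Finset.Ico 1 (o N), {N' : MarkedNormal k | x ^ m ∈ N'.1}ᶜ, ?_, ?_, ?_⟩
    · rintro N' ⟨h1, h2⟩
      simp only [Set.mem_iInter, Set.mem_compl_iff, Set.mem_setOf_eq, Finset.mem_Ico] at h1 h2
      have heq : o N' = o N := by
        letI := N'.2
        have hpe : (QuotientGroup.mk x : FreeGroup (Fin k) ⧸ N'.1) ^ (o N) = 1 :=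
          (hpow N' (o N)).mpr h1
        have hdvd : o N' ∣ o N := orderOf_dvd_of_pow_eq_one hpe
        have h0' : o N' ≠ 0 := by
          intro hz
          exact absurd hpe (by
            have := orderOf_eq_zero_iff'.mp hz (o N) (Nat.pos_of_ne_zero h0)
            exact this)
        have hle : o N' ≤ o N := Nat.le_of_dvd (Nat.pos_of_ne_zero h0) hdvd
        by_contra hne
        have hlt : o N' < o N := lt_of_le_of_ne hle hne
        have hmem : x ^ (o N') ∈ N'.1 := (hpow N' (o N')).mp (pow_orderOf_eq_one _)
        exact h2 (o N') ⟨Nat.one_le_iff_ne_zero.mpr h0', hlt⟩ hmem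
      simp only [Set.mem_preimage, hf, heq, if_neg h0]
      exact hns
    · exact ((isClopen_memSet k (x ^ (o N))).2).inter
        (isOpen_biInter_finset fun m _ => (isClopen_memSet k (x ^ m)).compl.2)
    · constructor
      · show x ^ (o N) ∈ N.1
        rw [← hpow]
        letI := N.2
        exact pow_orderOf_eq_one _
      · simp only [Set.mem_iInter, Set.mem_compl_iff, Set.mem_setOf_eq, Finset.mem_Ico]
        intro m hm hmem
        letI := N.2
        have := (hpow N m).mpr hmem
        exact pow_ne_one_of_lt_orderOf (by omega) hm.2 this
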